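/- arXiv:2103.14777 — 2 statements merged into one kernel-verified Lean document; each statement's English description precedes it below -/
import Mathlib

section
/- For any σ > 1 there exists a constant c(σ) > 1 depending only on σ such that for all real numbers x, y with c(σ) ≤ y ≤ x, one has ln^σ(x+y) - ln^σ(x) - (1/2)·ln^σ(y) ≤ 0, where ln^σ(t) denotes (ln t)^σ. -/
open Real

private lemma exp_le_one_add_three_mul {u : ℝ} (hu0 : 0 ≤ u) (hu1 : u ≤ 1) :
    Real.exp u ≤ 1 + 3 * u := by
  have h1 : -u + 1 ≤ Real.exp (-u) := Real.add_one_le_exp (-u)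
  have h2 : Real.exp (-u) * Real.exp u = 1 := by
    rw [← Real.exp_add]; simp
  have h3 : Real.exp u ≤ Real.exp 1 := Real.exp_le_exp.2 hu1
  have h4 : Real.exp 1 < 3 := by
    have := Real.exp_one_lt_d9; linarith
  have h5 : (0:ℝ) < Real.exp u := Real.exp_pos u
  nlinarith [Real.exp_pos (-u)]

private lemma rpow_gap {σ A δ : ℝ} (hσ : 1 ≤ σ) (hA : σ ≤ A) (hδ0 : 0 ≤ δ)
    (hδ1 : δ ≤ 1) : (A + δ) ^ σ ≤ A ^ σ + 3 * σ * δ * A ^ (σ - 1) := by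
  have hσ0 : (0:ℝ) < σ := by linarith
  have hA0 : (0:ℝ) < A := by linarith
  have hu0 : 0 ≤ σ * δ / A := by positivity
  have hu1 : σ * δ / A ≤ 1 := by
    rw [div_le_one hA0]; nlinarith
  have h1 : (A + δ) ^ σ = A ^ σ * (1 + δ / A) ^ σ := by
    rw [← Real.mul_rpow hA0.le (by positivity)]
    congr 1; field_simp
  have h2 : Real.log (1 + δ / A) ≤ δ / A := by
    have := Real.log_le_sub_one_of_pos (x := 1 + δ / A) (by positivity)
    linarith
  have h3 : (1 + δ / A) ^ σ ≤ Real.exp (σ * δ / A) := by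
    rw [Real.rpow_def_of_pos (by positivity)]
    apply Real.exp_le_exp.2
    calc Real.log (1 + δ / A) * σ ≤ (δ / A) * σ := by nlinarith
      _ = σ * δ / A := by ring
  have h4 : Real.exp (σ * δ / A) ≤ 1 + 3 * (σ * δ / A) :=
    exp_le_one_add_three_mul hu0 hu1
  have h5 : A ^ (σ - 1) = A ^ σ / A := Real.rpow_sub_one hA0.ne' σ
  have hAσ : (0:ℝ) < A ^ σ := Real.rpow_pos_of_pos hA0 σ
  calc (A + δ) ^ σ ≤ A ^ σ * (1 + 3 * (σ * δ / A)) := by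
        rw [h1]; exact mul_le_mul_of_nonneg_left (h3.trans h4) hAσ.le
    _ = A ^ σ + 3 * σ * δ * (A ^ σ / A) := by field_simp
    _ = A ^ σ + 3 * σ * δ * A ^ (σ - 1) := by rw [h5]

theorem stmt0 (σ : ℝ) (hσ : 1 < σ) :
    ∃ c : ℝ, 1 < c ∧ ∀ x y : ℝ, c ≤ y → y ≤ x →
      Real.log (x + y) ^ σ - Real.log x ^ σ - (1/2) * Real.log y ^ σ ≤ 0 := by
  have hσ0 : (0:ℝ) < σ := by linarith
  -- eventual bound: 3σ (log x)^(σ-1) ≤ √x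
  have hlo : (fun x : ℝ => Real.log x ^ (σ - 1)) =o[Filter.atTop]
      fun x : ℝ => x ^ ((1:ℝ)/2) :=
    isLittleO_log_rpow_rpow_atTop (σ - 1) (by norm_num)
  have hev : ∀ᶠ x : ℝ in Filter.atTop,
      3 * σ * Real.log x ^ (σ - 1) ≤ x ^ ((1:ℝ)/2) := by
    have h := hlo.def (c := 1 / (3 * σ)) (by positivity)
    filter_upwards [h, Filter.eventually_ge_atTop (1:ℝ)] with x hx hx1
    have hlx : 0 ≤ Real.log x := Real.log_nonneg hx1
    have hx0 : (0:ℝ) < x := by linarith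
    rw [Real.norm_eq_abs, Real.norm_eq_abs, abs_of_nonneg (by positivity),
      abs_of_nonneg (by positivity)] at hx
    rw [div_mul_eq_mul_div, le_div_iff₀ (by positivity)] at hx
    nlinarith
  obtain ⟨c₀, hc₀⟩ := Filter.eventually_atTop.1 hev
  set K : ℝ := 3 * σ * 2 ^ (σ + 1) with hK
  have two_rpow_two : (2:ℝ) ^ ((2:ℝ)) = 4 := by
    rw [show ((2:ℝ)) = ((2:ℕ):ℝ) from by norm_num]
    rw [Real.rpow_natCast]; norm_num
  have h2σ : (4:ℝ) ≤ 2 ^ (σ + 1) := by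
    rw [← two_rpow_two]
    exact Real.rpow_le_rpow_of_exponent_le (by norm_num) (by linarith)
  have hsplit : (2:ℝ) ^ (σ + 1) = 4 * 2 ^ (σ - 1) := by
    rw [show σ + 1 = (σ - 1) + 2 by ring, Real.rpow_add (by norm_num : (0:ℝ) < 2),
      two_rpow_two]
    ring
  have hK12 : 12 ≤ K := by
    have : 3 * σ * 4 ≤ K := by
      rw [hK]; exact mul_le_mul_of_nonneg_left h2σ (by positivity)
    nlinarith
  refine ⟨max c₀ (max 2 (Real.exp K)), lt_of_lt_of_le one_lt_two
    (le_trans (le_max_left _ _) (le_max_right _ _)), ?_⟩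
  intro x y hy hyx
  have hy2 : (2:ℝ) ≤ y := le_trans (le_trans (le_max_left _ _) (le_max_right _ _)) hy
  have hy0 : (0:ℝ) < y := by linarith
  have hx2 : (2:ℝ) ≤ x := le_trans hy2 hyx
  have hx0 : (0:ℝ) < x := by linarith
  set A := Real.log x with hA
  set L := Real.log y with hL
  have hLK : K ≤ L := by
    rw [hL, ← Real.log_exp K]
    exact Real.log_le_log (Real.exp_pos K)
      (le_trans (le_trans (le_max_right _ _) (le_max_right _ _)) hy)
  have hLA : L ≤ A := Real.log_le_log hy0 hyx
  have hL12 : (12:ℝ) ≤ L := le_trans hK12 hLK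
  have hKσ : σ ≤ K := by nlinarith
  have hσA : σ ≤ A := by linarith
  have hL0 : (0:ℝ) < L := by linarith
  have hA0 : (0:ℝ) < A := by linarith
  set δ := Real.log (x + y) - A with hδ
  have hlogxy : Real.log (x + y) = A + δ := by ring
  have hδ0 : 0 ≤ δ := by
    have : A ≤ Real.log (x + y) := Real.log_le_log hx0 (by linarith)
    simp only [hδ]; linarith
  have hδyx : δ ≤ y / x := by
    have h1 : Real.log (x + y) - A = Real.log ((x + y) / x) := by
      rw [hA, Real.log_div (by linarith) hx0.ne']
    have h2 : Real.log ((x + y) / x) ≤ (x + y) / x - 1 :=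
      Real.log_le_sub_one_of_pos (by positivity)
    have h3 : (x + y) / x - 1 = y / x := by field_simp; ring
    rw [hδ, h1]; linarith
  have hδ1 : δ ≤ 1 := by
    have : y / x ≤ 1 := by rw [div_le_one hx0]; linarith
    linarith
  rw [hlogxy]
  clear_value A L δ
  have hgap : (A + δ) ^ σ ≤ A ^ σ + 3 * σ * δ * A ^ (σ - 1) :=
    rpow_gap hσ.le hσA hδ0 hδ1
  have key : 3 * σ * δ * A ^ (σ - 1) ≤ (1/2) * L ^ σ := by
    have hLσ1 : (0:ℝ) < L ^ (σ - 1) := Real.rpow_pos_of_pos hL0 _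
    have hAσ1 : (0:ℝ) < A ^ (σ - 1) := Real.rpow_pos_of_pos hA0 _
    rcases le_or_gt x (y ^ 2) with hx_small | hx_big
    · -- x ≤ y², so A ≤ 2L
      have hA2L : A ≤ 2 * L := by
        have := Real.log_le_log hx0 hx_small
        rw [Real.log_pow] at this
        push_cast at this
        rw [hA, hL]; linarith
      have h1 : A ^ (σ - 1) ≤ (2 * L) ^ (σ - 1) :=
        Real.rpow_le_rpow hA0.le hA2L (by linarith)
      have h2 : (2 * L) ^ (σ - 1) = 2 ^ (σ - 1) * L ^ (σ - 1) :=
        Real.mul_rpow (by norm_num) hL0.le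
      have h3 : L ^ σ = L * L ^ (σ - 1) := by
        have h := Real.rpow_one_add' (y := σ - 1) hL0.le
          (show 1 + (σ - 1) ≠ 0 by intro h; linarith [h]; )
        rw [show (1 : ℝ) + (σ - 1) = σ by ring] at h
        exact h
      have h2σ1 : (0:ℝ) < 2 ^ (σ - 1) := Real.rpow_pos_of_pos (by norm_num) _
      have h5 : 12 * σ * 2 ^ (σ - 1) ≤ L := by
        have : K = 12 * σ * 2 ^ (σ - 1) := by rw [hK, hsplit]; ring
        linarith [hLK, this ▸ hLK]
      have h6 : 3 * σ * δ * A ^ (σ - 1) ≤ 3 * σ * (2 ^ (σ - 1) * L ^ (σ - 1)) := by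
        rw [← h2]
        have : δ * A ^ (σ - 1) ≤ 1 * (2 * L) ^ (σ - 1) :=
          mul_le_mul hδ1 h1 hAσ1.le (by norm_num)
        nlinarith
      rw [h3]
      have h7 : 12 * σ * 2 ^ (σ - 1) * L ^ (σ - 1) ≤ L * L ^ (σ - 1) :=
        mul_le_mul_of_nonneg_right h5 hLσ1.le
      have h8 : (0:ℝ) ≤ L * L ^ (σ - 1) := by positivity
      linarith
    · -- y² < x
      have hsx : 3 * σ * A ^ (σ - 1) ≤ x ^ ((1:ℝ)/2) := by
        rw [hA]; exact hc₀ x (le_trans (le_max_left _ _) (le_trans hy hyx))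
      have hseq : Real.sqrt x = x ^ ((1:ℝ)/2) := Real.sqrt_eq_rpow x
      set s := Real.sqrt x with hs
      have hs0 : (0:ℝ) < s := Real.sqrt_pos.2 hx0
      have hss : s * s = x := Real.mul_self_sqrt hx0.le
      have hys : y ≤ s := (Real.le_sqrt hy0.le hx0.le).2 hx_big.le
      rw [← hseq] at hsx
      have h1 : 3 * σ * δ * A ^ (σ - 1) ≤ (y / x) * s := by
        have h1a : δ * (3 * σ * A ^ (σ - 1)) ≤ (y / x) * s :=
          mul_le_mul hδyx hsx (by positivity) (by positivity)
        linarith [h1a]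
      have h2 : (y / x) * s ≤ 1 := by
        rw [div_mul_eq_mul_div, div_le_one hx0, ← hss]
        nlinarith
      have h3 : (2:ℝ) ≤ L ^ σ := by
        calc (2:ℝ) ≤ L := by linarith
          _ = L ^ (1:ℝ) := (Real.rpow_one L).symm
          _ ≤ L ^ σ := Real.rpow_le_rpow_of_exponent_le (by linarith) hσ.le
      linarith
  linarith
end

section
/- For σ > 1 and δ ∈ (0,1), one has Σ_{n ≥ 3} exp(-δ (ln n)^σ) ≤ (3/δ) · exp((2/(δσ))^{1/(σ-1)}). -/
open Real

theorem stmt7 (σ δ : ℝ) (hσ : 1 < σ) (hδ0 : 0 < δ) (hδ1 : δ < 1) :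
    ∑' n : ℕ, Real.exp (-δ * Real.log ((n : ℝ) + 3) ^ σ) ≤
      (3 / δ) * Real.exp ((2 / (δ * σ)) ^ (1 / (σ - 1))) := by
  have hσ0 : (0:ℝ) < σ := by linarith
  set C : ℝ := (2 / (δ * σ)) ^ (1 / (σ - 1)) with hCdef
  set A : ℝ := (2 / δ) ^ (1 / σ) with hAdef
  set h : ℝ → ℝ := fun y => Real.exp (-(δ/2) * y ^ σ) with hdef
  have hA1 : (1:ℝ) < 2 / δ := by
    rw [lt_div_iff₀ hδ0]; linarith
  have hApos : 0 < A := Real.rpow_pos_of_pos (by linarith) _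
  have hAσ : A ^ σ = 2 / δ := by
    rw [hAdef, one_div, Real.rpow_inv_rpow (by linarith) hσ0.ne']
  have hAle : A ≤ 2 / δ := by
    calc A ≤ (2/δ) ^ (1:ℝ) :=
          Real.rpow_le_rpow_of_exponent_le hA1.le (by
            rw [div_le_one hσ0]; linarith)
      _ = 2/δ := Real.rpow_one _
  have hCnonneg : 0 ≤ C := (Real.rpow_pos_of_pos (by positivity) _).le
  -- continuity / integrability of h
  have hcont : Continuous h := by
    exact Real.continuous_exp.comp
      (continuous_const.mul (Real.continuous_rpow_const hσ0.le))
  have hInt : ∀ u v : ℝ, IntervalIntegrable h MeasureTheory.volume u v :=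
    fun u v => hcont.intervalIntegrable u v
  -- Young: for y ≥ 0, y ≤ C + (δ/2) * y ^ σ
  have hyoung : ∀ y : ℝ, 0 ≤ y → y ≤ C + (δ/2) * y ^ σ := by
    intro y hy
    set q : ℝ := σ / (σ - 1) with hqdef
    have hpq : Real.HolderConjugate σ q :=
      (Real.holderConjugate_iff_eq_conjExponent hσ).2 hqdef
    set t : ℝ := (δ * σ / 2) ^ (1 / σ) with htdef
    have htpos : 0 < t := Real.rpow_pos_of_pos (by positivity) _
    have htσ : t ^ σ = δ * σ / 2 := by
      rw [htdef, one_div, Real.rpow_inv_rpow (by positivity) hσ0.ne']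
    have key := Real.young_inequality_of_nonneg
      (mul_nonneg hy htpos.le) (inv_nonneg.2 htpos.le) hpq
    have e1 : (y * t) ^ σ / σ = (δ/2) * y ^ σ := by
      rw [Real.mul_rpow hy htpos.le, htσ]
      field_simp
    have e2 : (t⁻¹) ^ q / q ≤ C := by
      have ht1 : (t⁻¹) ^ q = C := by
        have hx : (0:ℝ) < δ * σ / 2 := by positivity
        have hti : t⁻¹ = (δ * σ / 2) ^ (-(1/σ)) := by
          rw [htdef, Real.rpow_neg hx.le]
        rw [hti, ← Real.rpow_mul hx.le]
        have hexp2 : (-(1/σ)) * q = -(1/(σ-1)) := by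
          rw [hqdef]
          field_simp
        rw [hexp2, Real.rpow_neg hx.le, hCdef]
        have h2d : (2:ℝ) / (δ * σ) = (δ * σ / 2)⁻¹ := by
          field_simp
        rw [h2d, Real.inv_rpow hx.le]
      rw [ht1]
      exact div_le_self hCnonneg (by
        rw [hqdef, le_div_iff₀ (by linarith)]; linarith)
    have e0 : y * t * t⁻¹ = y := by field_simp
    calc y = y * t * t⁻¹ := e0.symm
      _ ≤ (y*t) ^ σ / σ + (t⁻¹) ^ q / q := key
      _ ≤ (δ/2) * y ^ σ + C := by rw [e1]; linarith
      _ = C + (δ/2) * y ^ σ := by ring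
  -- h y ≤ 1 for y ≥ 0
  have hle1 : ∀ y : ℝ, 0 ≤ y → h y ≤ 1 := by
    intro y hy
    rw [hdef]
    simp only
    rw [Real.exp_le_one_iff]
    have : 0 ≤ y ^ σ := Real.rpow_nonneg hy _
    nlinarith
  -- integral bound : for T ≥ 0, ∫_0^T h ≤ A + A * exp (-1)
  have hIB : ∀ T : ℝ, 0 ≤ T → (∫ y in (0:ℝ)..T, h y) ≤ A + A * Real.exp (-1) := by
    intro T hT
    have hbd : ∀ u v : ℝ, 0 ≤ u → u ≤ v → (∫ y in u..v, h y) ≤ v - u := by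
      intro u v hu huv
      calc (∫ y in u..v, h y) ≤ ∫ y in u..v, (1:ℝ) :=
            intervalIntegral.integral_mono_on huv (hInt u v)
              (intervalIntegrable_const)
              (fun x hx => hle1 x (le_trans hu hx.1))
        _ = v - u := by simp
    rcases le_or_gt T A with hTA | hTA
    · calc (∫ y in (0:ℝ)..T, h y) ≤ T - 0 := hbd 0 T le_rfl hT
        _ ≤ A := by linarith
        _ ≤ A + A * Real.exp (-1) := by nlinarith [Real.exp_pos (-1:ℝ)]
    · rw [← intervalIntegral.integral_add_adjacent_intervals (hInt 0 A) (hInt A T)]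
      have part1 : (∫ y in (0:ℝ)..A, h y) ≤ A := by
        have := hbd 0 A le_rfl hApos.le; linarith
      have part2 : (∫ y in A..T, h y) ≤ A * Real.exp (-1) := by
        have hpt : ∀ y ∈ Set.Icc A T, h y ≤ Real.exp (-(A⁻¹ * y)) := by
          intro y hy
          have hyA : A ≤ y := hy.1
          have hy0 : 0 < y := lt_of_lt_of_le hApos hyA
          rw [hdef]
          simp only
          apply Real.exp_le_exp.2
          have hsplit : y ^ σ = y ^ (σ - 1) * y :=
            calc y ^ σ = y ^ ((σ - 1) + 1) := by norm_num
              _ = y ^ (σ - 1) * y := Real.rpow_add_one hy0.ne' _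
          have hmono : A ^ (σ-1) ≤ y ^ (σ-1) :=
            Real.rpow_le_rpow hApos.le hyA (by linarith)
          have hAeq : (δ/2) * A ^ (σ-1) = A⁻¹ := by
            have : A ^ (σ - 1) = (2/δ) * A⁻¹ := by
              rw [Real.rpow_sub hApos, hAσ, Real.rpow_one, div_eq_mul_inv]
            rw [this]; field_simp
          have : A⁻¹ * y ≤ (δ/2) * y ^ σ := by
            rw [← hAeq, hsplit]
            have := mul_le_mul_of_nonneg_right hmono hy0.le
            nlinarith
          linarith
        calc (∫ y in A..T, h y) ≤ ∫ y in A..T, Real.exp (-(A⁻¹ * y)) :=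
              intervalIntegral.integral_mono_on hTA.le (hInt A T)
                ((Real.continuous_exp.comp (continuous_const.mul continuous_id).neg).intervalIntegrable A T)
                hpt
          _ = A * (Real.exp (-(A⁻¹ * A)) - Real.exp (-(A⁻¹ * T))) := by
              rw [intervalIntegral.integral_comp_mul_left (a := A) (b := T)
                (f := fun u => Real.exp (-u)) (inv_ne_zero hApos.ne')]
              rw [intervalIntegral.integral_comp_neg (f := Real.exp),
                integral_exp, inv_inv, smul_eq_mul]
          _ ≤ A * Real.exp (-1) := by
              have h1 : A⁻¹ * A = 1 := inv_mul_cancel₀ hApos.ne'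
              rw [h1]
              have : 0 < Real.exp (-(A⁻¹ * T)) := Real.exp_pos _
              nlinarith
      linarith
  -- per-term bound
  set a : ℕ → ℝ := fun k => Real.log ((k:ℝ) + 2) with hadef
  have hkey : ∀ n : ℕ, Real.exp (-δ * Real.log ((n : ℝ) + 3) ^ σ) ≤
      Real.exp C * ∫ y in (a n)..(a (n+1)), h y := by
    intro n
    have han1 : a (n+1) = Real.log ((n:ℝ)+3) := by
      rw [hadef]; push_cast; ring_nf
    set L : ℝ := Real.log ((n:ℝ)+3) with hLdef
    set L' : ℝ := Real.log ((n:ℝ)+2) with hL'def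
    have hn2 : (0:ℝ) < (n:ℝ) + 2 := by positivity
    have hn3 : (0:ℝ) < (n:ℝ) + 3 := by positivity
    have hn0 : (0:ℝ) ≤ (n:ℝ) := Nat.cast_nonneg n
    have hL'0 : 0 < L' := Real.log_pos (by linarith)
    have hLL' : L' < L := Real.log_lt_log hn2 (by linarith)
    have hL0 : 0 < L := lt_trans hL'0 hLL'
    -- exp(-L) ≤ L - L'
    have hgap : Real.exp (-L) ≤ L - L' := by
      have hlog : Real.log (((n:ℝ)+2)/((n:ℝ)+3)) ≤ ((n:ℝ)+2)/((n:ℝ)+3) - 1 :=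
        Real.log_le_sub_one_of_pos (by positivity)
      rw [Real.log_div hn2.ne' hn3.ne'] at hlog
      have hexp : Real.exp (-L) = ((n:ℝ)+3)⁻¹ := by
        rw [Real.exp_neg, hLdef, Real.exp_log hn3]
      rw [hexp]
      have : ((n:ℝ)+2)/((n:ℝ)+3) - 1 = -(((n:ℝ)+3)⁻¹) := by field_simp; norm_num
      rw [this] at hlog
      linarith
    -- main pointwise bound
    have hsplit : Real.exp (-δ * L ^ σ) ≤ Real.exp C * Real.exp (-L) * h L := by
      rw [hdef]
      simp only
      rw [← Real.exp_add, ← Real.exp_add]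
      apply Real.exp_le_exp.2
      have := hyoung L hL0.le
      nlinarith
    have hconst : h L * (L - L') ≤ ∫ y in L'..L, h y := by
      have : (∫ y in L'..L, h L) = (L - L') * h L := by
        rw [intervalIntegral.integral_const, smul_eq_mul]
      rw [mul_comm, ← this]
      apply intervalIntegral.integral_mono_on hLL'.le intervalIntegrable_const (hInt L' L)
      intro y hy
      rw [hdef]
      simp only
      apply Real.exp_le_exp.2
      have hy0 : 0 ≤ y := le_trans hL'0.le hy.1
      have : y ^ σ ≤ L ^ σ := Real.rpow_le_rpow hy0 hy.2 hσ0.le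
      nlinarith
    have hpos : 0 < h L := Real.exp_pos _
    calc Real.exp (-δ * L ^ σ) ≤ Real.exp C * Real.exp (-L) * h L := hsplit
      _ ≤ Real.exp C * (L - L') * h L :=
          mul_le_mul_of_nonneg_right
            (mul_le_mul_of_nonneg_left hgap (Real.exp_pos C).le) hpos.le
      _ = Real.exp C * (h L * (L - L')) := by ring
      _ ≤ Real.exp C * ∫ y in L'..L, h y := by
          have := Real.exp_pos C
          exact mul_le_mul_of_nonneg_left hconst (Real.exp_pos C).le
      _ = Real.exp C * ∫ y in (a n)..(a (n+1)), h y := by rw [han1]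
  -- sum the bounds
  apply Real.tsum_le_of_sum_range_le (fun n => (Real.exp_pos _).le)
  intro N
  calc ∑ n ∈ Finset.range N, Real.exp (-δ * Real.log ((n : ℝ) + 3) ^ σ)
      ≤ ∑ n ∈ Finset.range N, Real.exp C * ∫ y in (a n)..(a (n+1)), h y :=
        Finset.sum_le_sum (fun n _ => hkey n)
    _ = Real.exp C * ∫ y in (a 0)..(a N), h y := by
        rw [← Finset.mul_sum,
          intervalIntegral.sum_integral_adjacent_intervals (fun k _ => hInt _ _)]
    _ ≤ Real.exp C * (A + A * Real.exp (-1)) := by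
        apply mul_le_mul_of_nonneg_left _ (Real.exp_pos C).le
        have h0 : (0:ℝ) ≤ a 0 := by
          rw [hadef]; simp; exact Real.log_nonneg (by norm_num)
        have hmono : a 0 ≤ a N := by
          rw [hadef]
          have hN : (0:ℝ) ≤ (N:ℝ) := Nat.cast_nonneg N
          exact Real.log_le_log (by norm_num) (by push_cast; linarith)
        calc (∫ y in (a 0)..(a N), h y) ≤ ∫ y in (0:ℝ)..a N, h y := by
              apply intervalIntegral.integral_mono_interval h0 hmono le_rfl
              · filter_upwards with x
                exact (Real.exp_pos _).le
              · exact hInt 0 (a N)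
          _ ≤ A + A * Real.exp (-1) := hIB (a N) (le_trans h0 hmono)
    _ ≤ (3 / δ) * Real.exp C := by
        have he : Real.exp (-1) ≤ 1/2 := by
          rw [Real.exp_neg]
          rw [inv_le_comm₀ (Real.exp_pos 1) (by norm_num)]
          have := Real.add_one_le_exp 1
          linarith
        have hX : A + A * Real.exp (-1) ≤ 3 / δ := by
          have h1 : A * Real.exp (-1) ≤ A * (1/2) :=
            mul_le_mul_of_nonneg_left he hApos.le
          have h2 : A * (3/2) ≤ (2/δ) * (3/2) :=
            mul_le_mul_of_nonneg_right hAle (by norm_num)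
          have h3 : (2/δ) * (3/2) = 3/δ := by ring
          linarith
        rw [mul_comm (3/δ)]
        exact mul_le_mul_of_nonneg_left hX (Real.exp_pos C).le
end
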